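/- Fix c ∈ [0, 3π/2) and define f₁(θ) := 1/cos θ + sin(c − θ − π/2)/cos θ + 1. Then for every θ satisfying c/2 − π/4 ≤ θ ≤ c/2 and 0 ≤ θ < π/2, one has: f₁(θ) ≥ f₁(c/2) if 0 ≤ c ≤ 2π/3; f₁(θ) ≥ f₁(π − c) if 2π/3 < c ≤ 5π/6; and f₁(θ) ≥ f₁(c/2 − π/4) if 5π/6 < c < 3π/2. That is, on this domain f₁ attains its minimum at θ = c/2, θ = π − c, or θ = c/2 − π/4, respectively. -/

import Mathlib

open Real

/-- The length of the Type-1 inspection curve with deployment angle `θ`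
for an arc of length `c`. -/
noncomputable def f1 (c θ : ℝ) : ℝ :=
  1 / Real.cos θ + Real.sin (c - θ - π/2) / Real.cos θ + 1

private lemma g_hasDeriv (c x : ℝ) (hx : Real.cos x ≠ 0) :
    HasDerivAt (fun t => (1 - Real.cos (c - t)) / Real.cos t)
      ((Real.sin x - Real.sin c) / (Real.cos x) ^ 2) x := by
  have h1 : HasDerivAt (fun t : ℝ => c - t) (-1) x := by
    simpa using (hasDerivAt_id x).const_sub c
  have h2 : HasDerivAt (fun t => Real.cos (c - t)) (Real.sin (c - x)) x := by
    have := (Real.hasDerivAt_cos (c - x)).comp x h1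
    simpa [Function.comp_def] using this
  have h3 : HasDerivAt (fun t => 1 - Real.cos (c - t)) (-Real.sin (c - x)) x := by
    simpa using h2.const_sub 1
  have h4 := h3.div (Real.hasDerivAt_cos x) hx
  have hnum : Real.sin x - Real.sin c =
      -Real.sin (c - x) * Real.cos x - (1 - Real.cos (c - x)) * (-Real.sin x) := by
    rw [Real.sin_sub, Real.cos_sub]
    linear_combination Real.sin c * Real.sin_sq_add_cos_sq x
  rw [hnum]
  exact h4

private lemma g_anti (c a b : ℝ) (h0 : 0 ≤ a) (hab : a ≤ b) (hb : b < π/2)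
    (hbc : b ≤ c) (hbc' : b ≤ π - c) :
    (1 - Real.cos (c - b)) / Real.cos b ≤ (1 - Real.cos (c - a)) / Real.cos a := by
  have hcos : ∀ x ∈ Set.Icc a b, 0 < Real.cos x := fun x hx =>
    Real.cos_pos_of_mem_Ioo ⟨by linarith [hx.1, Real.pi_pos], by linarith [hx.2]⟩
  have hanti : AntitoneOn (fun t => (1 - Real.cos (c - t)) / Real.cos t) (Set.Icc a b) := by
    apply antitoneOn_of_deriv_nonpos (convex_Icc a b)
    · exact ContinuousOn.div (by fun_prop) (by fun_prop) (fun x hx => (hcos x hx).ne')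
    · intro x hx
      rw [interior_Icc] at hx
      exact (g_hasDeriv c x (hcos x ⟨hx.1.le, hx.2.le⟩).ne').differentiableAt.differentiableWithinAt
    · intro x hx
      rw [interior_Icc] at hx
      rw [(g_hasDeriv c x (hcos x ⟨hx.1.le, hx.2.le⟩).ne').deriv]
      apply div_nonpos_of_nonpos_of_nonneg _ (sq_nonneg _)
      have hsin : Real.sin x ≤ Real.sin c := by
        rcases le_total c (π/2) with h | h
        · exact Real.sin_le_sin_of_le_of_le_pi_div_two
            (by linarith [Real.pi_pos, hx.1]) h (by linarith [hx.2])
        · rw [← Real.sin_pi_sub c]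
          exact Real.sin_le_sin_of_le_of_le_pi_div_two
            (by linarith [Real.pi_pos, hx.1]) (by linarith) (by linarith [hx.2])
      linarith
  exact hanti ⟨le_refl a, hab⟩ ⟨hab, le_refl b⟩ hab

private lemma g_mono (c a b : ℝ) (h0 : 0 ≤ a) (hab : a ≤ b) (hb : b < π/2)
    (hac : π - c ≤ a) (hc2 : c ≤ 2 * π) :
    (1 - Real.cos (c - a)) / Real.cos a ≤ (1 - Real.cos (c - b)) / Real.cos b := by
  have hcos : ∀ x ∈ Set.Icc a b, 0 < Real.cos x := fun x hx =>
    Real.cos_pos_of_mem_Ioo ⟨by linarith [hx.1, Real.pi_pos], by linarith [hx.2]⟩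
  have hmono : MonotoneOn (fun t => (1 - Real.cos (c - t)) / Real.cos t) (Set.Icc a b) := by
    apply monotoneOn_of_deriv_nonneg (convex_Icc a b)
    · exact ContinuousOn.div (by fun_prop) (by fun_prop) (fun x hx => (hcos x hx).ne')
    · intro x hx
      rw [interior_Icc] at hx
      exact (g_hasDeriv c x (hcos x ⟨hx.1.le, hx.2.le⟩).ne').differentiableAt.differentiableWithinAt
    · intro x hx
      rw [interior_Icc] at hx
      rw [(g_hasDeriv c x (hcos x ⟨hx.1.le, hx.2.le⟩).ne').deriv]
      apply div_nonneg _ (sq_nonneg _)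
      have hsin : Real.sin c ≤ Real.sin x := by
        rcases le_total c π with h | h
        · rw [← Real.sin_pi_sub c]
          exact Real.sin_le_sin_of_le_of_le_pi_div_two
            (by linarith) (by linarith [hx.2]) (by linarith [hx.1])
        · have h1 : Real.sin c ≤ 0 := by
            have := Real.sin_nonneg_of_nonneg_of_le_pi (x := c - π) (by linarith) (by linarith)
            have h2 : Real.sin ((c - π) + π) = -Real.sin (c - π) := Real.sin_add_pi _
            rw [show (c - π) + π = c by ring] at h2
            linarith
          have h2 : 0 ≤ Real.sin x :=
            Real.sin_nonneg_of_nonneg_of_le_pi (by linarith [hx.1])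
              (by linarith [hx.2, Real.pi_pos])
          linarith
      linarith
  exact hmono ⟨le_refl a, hab⟩ ⟨hab, le_refl b⟩ hab

theorem f1_minimizers (c : ℝ) (hc0 : 0 ≤ c) (hc1 : c < 3*π/2) (θ : ℝ)
    (h1 : c/2 - π/4 ≤ θ) (h2 : θ ≤ c/2) (h3 : 0 ≤ θ) (h4 : θ < π/2) :
    (c ≤ 2*π/3 → f1 c (c/2) ≤ f1 c θ) ∧
    (2*π/3 < c → c ≤ 5*π/6 → f1 c (π - c) ≤ f1 c θ) ∧
    (5*π/6 < c → f1 c (c/2 - π/4) ≤ f1 c θ) := by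
  have pi_pos := Real.pi_pos
  have hf : ∀ t : ℝ, f1 c t = (1 - Real.cos (c - t)) / Real.cos t + 1 := by
    intro t
    unfold f1
    rw [Real.sin_sub_pi_div_two]
    ring
  refine ⟨fun hc => ?_, fun hc hc' => ?_, fun hc => ?_⟩
  · have h := g_anti c θ (c/2) h3 h2 (by linarith) (by linarith) (by linarith)
    rw [hf, hf]; linarith
  · rcases le_total θ (π - c) with h | h
    · have h' := g_anti c θ (π - c) h3 h (by linarith) (by linarith) le_rfl
      rw [hf, hf]; linarith
    · have h' := g_mono c (π - c) θ (by linarith) h h4 le_rfl (by linarith)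
      rw [hf, hf]; linarith
  · have h' := g_mono c (c/2 - π/4) θ (by linarith) h1 h4 (by linarith) (by linarith)
    rw [hf, hf]; linarith
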